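/- Let X₁, X₂ : ℝ³ → ℝ³ be smooth vector fields, let (q,u) be an admissible pair on [0,T] with an extremal lift λ, and suppose φ₁₂(t) ≠ 0 for all t ∈ [0,T]. Let τ < τ' be two switching times such that (τ, τ') is a bang arc and u₁ switches at τ. Then φ₁(τ') ≠ 0; consequently u₁ does not switch at τ', so the control that switches at τ' is u₂. Symmetrically, if u₂ switches at τ, then the control that switches at τ' is u₁: the switchings of u₁ and of u₂ alternate along a bang-bang extremal on which φ₁₂ never vanishes. -/

import Mathlib

open MeasureTheory Set
open scoped RealInnerProductSpace

noncomputable section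

/-- The state space `ℝ³`, with its Euclidean inner product. -/
abbrev E3 : Type := EuclideanSpace ℝ (Fin 3)

/-- Lie bracket of vector fields: `[X,Y] = DY·X − DX·Y`. -/
def lieBracketVF {E : Type*} [NormedAddCommGroup E] [NormedSpace ℝ E]
    (X Y : E → E) : E → E :=
  fun x => fderiv ℝ Y x (X x) - fderiv ℝ X x (Y x)

/-- `X₁₂ = [X₁, X₂]`. -/
def X12 (X₁ X₂ : E3 → E3) : E3 → E3 := lieBracketVF X₁ X₂

/-- `X₊₁₂ = [X₁ + X₂, X₁₂]`. -/
def Xp12 (X₁ X₂ : E3 → E3) : E3 → E3 :=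
  lieBracketVF (fun x => X₁ x + X₂ x) (X12 X₁ X₂)

/-- `X₋₁₂ = [X₁ − X₂, X₁₂]`. -/
def Xm12 (X₁ X₂ : E3 → E3) : E3 → E3 :=
  lieBracketVF (fun x => X₁ x - X₂ x) (X12 X₁ X₂)

/-- An admissible pair on `[0,T]`: a measurable control `u = (u₁,u₂)` with values in
`[−1,1]²` together with an absolutely continuous trajectory `q` (encoded by the
integral representation) satisfying `q' = u₁X₁(q) + u₂X₂(q)` a.e. on `[0,T]`. -/
def IsAdmissiblePair (X₁ X₂ : E3 → E3) (T : ℝ) (q : ℝ → E3) (u : ℝ → ℝ × ℝ) : Prop :=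
  0 ≤ T ∧ Measurable u ∧ (∀ t ∈ Icc (0:ℝ) T, |(u t).1| ≤ 1 ∧ |(u t).2| ≤ 1) ∧
    IntegrableOn (fun s => (u s).1 • X₁ (q s) + (u s).2 • X₂ (q s)) (Icc 0 T) ∧
    ∀ t ∈ Icc (0:ℝ) T,
      q t = q 0 + ∫ s in Icc (0:ℝ) t, ((u s).1 • X₁ (q s) + (u s).2 • X₂ (q s))

/-- A trajectory `q` on `[0,T]` is time-optimal if no admissible pair on a
shorter interval `[0,T'']` joins `q 0` to `q T`. -/
def IsTimeOptimal (X₁ X₂ : E3 → E3) (T : ℝ) (q : ℝ → E3) : Prop :=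
  ¬ ∃ (T'' : ℝ) (q' : ℝ → E3) (u' : ℝ → ℝ × ℝ),
      T'' < T ∧ IsAdmissiblePair X₁ X₂ T'' q' u' ∧ q' 0 = q 0 ∧ q' T'' = q T

/-- Right-hand side of the adjoint equation: `−(Dₓ(u₁X₁ + u₂X₂)(q t))ᵀ λ(t)`. -/
def adjVec (X₁ X₂ : E3 → E3) (u : ℝ → ℝ × ℝ) (q lam : ℝ → E3) (t : ℝ) : E3 :=
  -(ContinuousLinearMap.adjoint
      ((u t).1 • fderiv ℝ X₁ (q t) + (u t).2 • fderiv ℝ X₂ (q t)) (lam t))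

/-- An extremal lift of an admissible pair `(q,u)` on `[0,T]`: a nonvanishing
absolutely continuous solution of the adjoint equation satisfying the
maximality condition of the PMP a.e. -/
def IsExtremalLift (X₁ X₂ : E3 → E3) (T : ℝ) (q : ℝ → E3) (u : ℝ → ℝ × ℝ)
    (lam : ℝ → E3) : Prop :=
  (∀ t ∈ Icc (0:ℝ) T, lam t ≠ 0) ∧
    IntegrableOn (adjVec X₁ X₂ u q lam) (Icc 0 T) ∧
    (∀ t ∈ Icc (0:ℝ) T, lam t = lam 0 + ∫ s in Icc (0:ℝ) t, adjVec X₁ X₂ u q lam s) ∧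
    ∀ᵐ t ∂volume, t ∈ Icc (0:ℝ) T →
      (u t).1 * ⟪lam t, X₁ (q t)⟫ + (u t).2 * ⟪lam t, X₂ (q t)⟫ =
        |⟪lam t, X₁ (q t)⟫| + |⟪lam t, X₂ (q t)⟫|

/-- The switching function `t ↦ ⟨λ(t), X(q(t))⟩` associated with a vector field `X`. -/
def phiF (X : E3 → E3) (q lam : ℝ → E3) (t : ℝ) : ℝ := ⟪lam t, X (q t)⟫

/-- `(a,b)` is a bang arc: a maximal open subinterval of `[0,T]` on which both
`φ₁` and `φ₂` are nonvanishing. -/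
def IsBangArc (T : ℝ) (φ₁ φ₂ : ℝ → ℝ) (a b : ℝ) : Prop :=
  0 ≤ a ∧ a < b ∧ b ≤ T ∧ (∀ t ∈ Ioo a b, φ₁ t ≠ 0 ∧ φ₂ t ≠ 0) ∧
    ∀ a' b', 0 ≤ a' → a' ≤ a → b ≤ b' → b' ≤ T →
      (∀ t ∈ Ioo a' b', φ₁ t ≠ 0 ∧ φ₂ t ≠ 0) → a' = a ∧ b' = b

/-- `(a,b)` is a `u₁`-singular arc: a maximal open subinterval of `[0,T]` on which
`φ₁` vanishes identically and `φ₂` is nonvanishing. -/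
def IsU1SingularArc (T : ℝ) (φ₁ φ₂ : ℝ → ℝ) (a b : ℝ) : Prop :=
  0 ≤ a ∧ a < b ∧ b ≤ T ∧ (∀ t ∈ Ioo a b, φ₁ t = 0 ∧ φ₂ t ≠ 0) ∧
    ∀ a' b', 0 ≤ a' → a' ≤ a → b ≤ b' → b' ≤ T →
      (∀ t ∈ Ioo a' b', φ₁ t = 0 ∧ φ₂ t ≠ 0) → a' = a ∧ b' = b

/-- `(a,b)` is a `u₂`-singular arc. -/
def IsU2SingularArc (T : ℝ) (φ₁ φ₂ : ℝ → ℝ) (a b : ℝ) : Prop :=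
  0 ≤ a ∧ a < b ∧ b ≤ T ∧ (∀ t ∈ Ioo a b, φ₂ t = 0 ∧ φ₁ t ≠ 0) ∧
    ∀ a' b', 0 ≤ a' → a' ≤ a → b ≤ b' → b' ≤ T →
      (∀ t ∈ Ioo a' b', φ₂ t = 0 ∧ φ₁ t ≠ 0) → a' = a ∧ b' = b

/-- A singular arc is a `u₁`- or `u₂`-singular arc. -/
def IsSingularArc (T : ℝ) (φ₁ φ₂ : ℝ → ℝ) (a b : ℝ) : Prop :=
  IsU1SingularArc T φ₁ φ₂ a b ∨ IsU2SingularArc T φ₁ φ₂ a b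

/-- A switching time: a point of `(0,T)` separating two bang arcs. -/
def IsSwitchingTime (T : ℝ) (φ₁ φ₂ : ℝ → ℝ) (τ : ℝ) : Prop :=
  ∃ a b, IsBangArc T φ₁ φ₂ a τ ∧ IsBangArc T φ₁ φ₂ τ b

/-- The scalar control `ui` switches at the switching time `τ`: it is a.e. equal to
a constant of modulus 1 on a left neighborhood of `τ` and to the opposite constant
on a right neighborhood of `τ`. -/
def SwitchesAt (T : ℝ) (φ₁ φ₂ : ℝ → ℝ) (ui : ℝ → ℝ) (τ : ℝ) : Prop :=
  IsSwitchingTime T φ₁ φ₂ τ ∧ ∃ c : ℝ, |c| = 1 ∧ ∃ ε > 0,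
    (∀ᵐ t ∂volume, t ∈ Ioo (τ - ε) τ → ui t = c) ∧
    (∀ᵐ t ∂volume, t ∈ Ioo τ (τ + ε) → ui t = -c)

/-- The trajectory is bang-bang: `[0,T]` is the union of the closures of finitely
many bang arcs. -/
def IsBangBang (T : ℝ) (φ₁ φ₂ : ℝ → ℝ) : Prop :=
  ∃ (n : ℕ) (a b : Fin n → ℝ), (∀ i, IsBangArc T φ₁ φ₂ (a i) (b i)) ∧
    Icc (0:ℝ) T = ⋃ i, Icc (a i) (b i)


section Aux

open Filter Topology intervalIntegral
open scoped NNReal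

/-- Lebesgue differentiation: the primitive of an integrable function has a.e. the
function itself as derivative. -/
lemma ae_hasDerivAt_primitive {E : Type*} [NormedAddCommGroup E] [NormedSpace ℝ E]
    [CompleteSpace E] {f : ℝ → E} (hf : Integrable f volume) :
    ∀ᵐ x ∂volume, HasDerivAt (fun t => ∫ s in (0:ℝ)..t, f s) (f x) x := by
  filter_upwards [(IsUnifLocDoublingMeasure.vitaliFamily (volume : Measure ℝ)
      1).ae_tendsto_average_norm_sub hf.locallyIntegrable] with x hx
  set P : ℝ → E := fun t => ∫ s in (0:ℝ)..t, f s with hP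
  have hkey : ∀ y : ℝ, y ≠ x →
      slope P x y - f x = (y - x)⁻¹ • ∫ s in x..y, (f s - f x) := by
    intro y hy
    have h1 : P y - P x = ∫ s in x..y, f s :=
      integral_interval_sub_left hf.intervalIntegrable hf.intervalIntegrable
    have h2 : ∫ s in x..y, (f s - f x) = (∫ s in x..y, f s) - (y - x) • f x := by
      rw [intervalIntegral.integral_sub hf.intervalIntegrable
        (intervalIntegrable_const), intervalIntegral.integral_const]
    rw [slope_def_module, h1, h2, smul_sub, smul_smul,
      inv_mul_cancel₀ (sub_ne_zero.2 hy), one_smul]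
  have hbound : ∀ y : ℝ, y ≠ x → ‖slope P x y - f x‖ ≤
      ⨍ s in Icc (min x y) (max x y), ‖f s - f x‖ := by
    intro y hy
    have hInt : IntegrableOn (fun s => ‖f s - f x‖) (Icc (min x y) (max x y)) volume :=
      ((hf.integrableOn.sub (integrableOn_const measure_Icc_lt_top.ne)).norm)
    have hIoc : ‖∫ s in x..y, (f s - f x)‖ ≤ ∫ s in Icc (min x y) (max x y), ‖f s - f x‖ := by
      refine (intervalIntegral.norm_integral_le_integral_norm_uIoc).trans ?_
      refine setIntegral_mono_set hInt ?_ ?_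
      · exact Eventually.of_forall fun s => norm_nonneg _
      · exact HasSubset.Subset.eventuallyLE Ioc_subset_Icc_self
    have habs : |y - x| = max x y - min x y := by
      rcases le_total x y with h | h
      · rw [abs_of_nonneg (by linarith), max_eq_right h, min_eq_left h]
      · rw [abs_of_nonpos (by linarith), max_eq_left h, min_eq_right h]; ring
    rw [hkey y hy, norm_smul, norm_inv, Real.norm_eq_abs]
    calc |y - x|⁻¹ * ‖∫ s in x..y, (f s - f x)‖
        ≤ |y - x|⁻¹ * ∫ s in Icc (min x y) (max x y), ‖f s - f x‖ :=
          mul_le_mul_of_nonneg_left hIoc (inv_nonneg.2 (abs_nonneg _))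
      _ = ⨍ s in Icc (min x y) (max x y), ‖f s - f x‖ := by
          rw [setAverage_eq, Real.volume_real_Icc_of_le
            min_le_max, smul_eq_mul, habs]
  rw [hasDerivAt_iff_tendsto_slope, ← nhdsLT_sup_nhdsGT, Filter.tendsto_sup]
  constructor
  · rw [tendsto_iff_norm_sub_tendsto_zero]
    refine squeeze_zero' (g := fun y => ⨍ s in Icc y x, ‖f s - f x‖)
      (Eventually.of_forall fun _ => norm_nonneg _) ?_
      (hx.comp (Real.tendsto_Icc_vitaliFamily_left x))
    filter_upwards [self_mem_nhdsWithin] with y (hy : y < x)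
    have := hbound y hy.ne
    rwa [min_eq_right hy.le, max_eq_left hy.le] at this
  · rw [tendsto_iff_norm_sub_tendsto_zero]
    refine squeeze_zero' (g := fun y => ⨍ s in Icc x y, ‖f s - f x‖)
      (Eventually.of_forall fun _ => norm_nonneg _) ?_
      (hx.comp (Real.tendsto_Icc_vitaliFamily_right x))
    filter_upwards [self_mem_nhdsWithin] with y (hy : x < y)
    have := hbound y hy.ne'
    rwa [min_eq_left hy.le, max_eq_right hy.le] at this

lemma tendsto_backward_quotient {φ : ℝ → ℝ} {g t : ℝ} (hd : HasDerivAt φ g t) :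
    Tendsto (fun h => (φ t - φ (t - h)) / h) (𝓝[>] (0:ℝ)) (𝓝 g) := by
  have hm : Tendsto (fun h : ℝ => t - h) (𝓝[>] (0:ℝ)) (𝓝[≠] t) := by
    have h1 : Tendsto (fun h : ℝ => t - h) (𝓝[>] (0:ℝ)) (𝓝 t) := by
      have := (tendsto_id (x := 𝓝 (0:ℝ))).const_sub t
      simp only [sub_zero, id] at this
      exact this.mono_left nhdsWithin_le_nhds
    refine tendsto_nhdsWithin_of_tendsto_nhds_of_eventually_within _ h1 ?_
    filter_upwards [self_mem_nhdsWithin] with h (hh : 0 < h)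
    simp only [mem_compl_iff, mem_singleton_iff]
    intro hc; nlinarith [sub_eq_self.mp hc]
  have := (hasDerivAt_iff_tendsto_slope.1 hd).comp hm
  refine this.congr' ?_
  filter_upwards [self_mem_nhdsWithin] with h (hh : 0 < h)
  show slope φ t (t - h) = (φ t - φ (t - h)) / h
  rw [slope_def_field, div_eq_div_iff (by linarith) hh.ne']
  ring

lemma tendsto_avg_left {φ : ℝ → ℝ} {K : ℝ≥0} (hφ : LipschitzWith K φ) (b : ℝ) :
    Tendsto (fun h => h⁻¹ * ∫ t in (b-h)..b, φ t) (𝓝[>] (0:ℝ)) (𝓝 (φ b)) := by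
  rw [tendsto_iff_norm_sub_tendsto_zero]
  refine squeeze_zero' (g := fun h => K * h)
    (Eventually.of_forall fun _ => norm_nonneg _) ?_ ?_
  · filter_upwards [self_mem_nhdsWithin] with h (hh : 0 < h)
    have hint : IntervalIntegrable φ volume (b - h) b :=
      hφ.continuous.intervalIntegrable _ _
    have h1 : ∫ t in (b-h)..b, (φ t - φ b) = (∫ t in (b-h)..b, φ t) - h * φ b := by
      rw [intervalIntegral.integral_sub hint intervalIntegrable_const,
        intervalIntegral.integral_const, smul_eq_mul]
      ring_nf
    have h2 : ‖∫ t in (b-h)..b, (φ t - φ b)‖ ≤ (K * h) * |b - (b - h)| := by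
      refine intervalIntegral.norm_integral_le_of_norm_le_const ?_
      intro x hx
      rw [uIoc_of_le (by linarith)] at hx
      have hxb : |x - b| ≤ h := by
        rw [abs_le]; constructor
        · linarith [hx.1]
        · linarith [hx.2]
      calc ‖φ x - φ b‖ ≤ K * |x - b| := by
            have := hφ.dist_le_mul x b
            rwa [Real.dist_eq, Real.dist_eq] at this
        _ ≤ K * h := mul_le_mul_of_nonneg_left hxb K.2
    have heq : h⁻¹ * (∫ t in (b-h)..b, φ t) - φ b
        = h⁻¹ * ∫ t in (b-h)..b, (φ t - φ b) := by
      rw [h1]; field_simp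
    rw [heq, norm_mul, norm_inv, Real.norm_eq_abs, abs_of_pos hh]
    have hb2 : |b - (b - h)| = h := by rw [abs_of_pos (by linarith)]; ring_nf
    calc h⁻¹ * ‖∫ t in (b-h)..b, (φ t - φ b)‖ ≤ h⁻¹ * ((K * h) * h) := by
          rw [hb2] at h2
          exact mul_le_mul_of_nonneg_left h2 (inv_nonneg.2 hh.le)
      _ = K * h := by field_simp
  · have : Tendsto (fun h : ℝ => (K : ℝ) * h) (𝓝 (0:ℝ)) (𝓝 ((K:ℝ) * 0)) :=
      (tendsto_id (x := 𝓝 (0:ℝ))).const_mul _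
    simpa using this.mono_left nhdsWithin_le_nhds

/-- Fundamental theorem of calculus for a Lipschitz function with an a.e. derivative. -/
lemma ftc_lipschitz {φ g : ℝ → ℝ} {K : ℝ≥0} (hφ : LipschitzWith K φ)
    {a b : ℝ} (hab : a < b)
    (hderiv : ∀ᵐ t ∂volume, t ∈ Ioo a b → HasDerivAt φ (g t) t) :
    φ b - φ a = ∫ t in Ioc a b, g t := by
  have hLip : ∀ s t : ℝ, |φ s - φ t| ≤ K * |s - t| := by
    intro s t
    have := hφ.dist_le_mul s t
    rwa [Real.dist_eq, Real.dist_eq] at this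
  have hDCT : Tendsto (fun h => ∫ t in Ioc a b, (φ t - φ (t - h)) / h)
      (𝓝[>] (0:ℝ)) (𝓝 (∫ t in Ioc a b, g t)) := by
    refine tendsto_integral_filter_of_dominated_convergence (bound := fun _ => (K:ℝ)) ?_ ?_ ?_ ?_
    · refine Eventually.of_forall fun h => ?_
      have hc : Continuous fun t => (φ t - φ (t - h)) / h :=
        (hφ.continuous.sub (hφ.continuous.comp (continuous_id.sub continuous_const))).div_const _
      exact hc.aestronglyMeasurable.restrict
    · filter_upwards [self_mem_nhdsWithin] with h (hh : 0 < h)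
      refine Eventually.of_forall fun t => ?_
      rw [Real.norm_eq_abs, abs_div, abs_of_pos hh, div_le_iff₀ hh]
      calc |φ t - φ (t - h)| ≤ K * |t - (t - h)| := hLip t (t - h)
        _ = K * h := by rw [abs_of_pos (by linarith)]; ring_nf
    · exact integrableOn_const measure_Ioc_lt_top.ne
    · have hb : ∀ᵐ t : ℝ ∂volume, t ≠ b := by
        refine ae_iff.2 ?_
        simpa using measure_singleton b
      filter_upwards [ae_restrict_of_ae hderiv, ae_restrict_mem measurableSet_Ioc,
        ae_restrict_of_ae hb] with t h1 h2 h3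
      exact tendsto_backward_quotient (h1 ⟨h2.1, lt_of_le_of_ne h2.2 h3⟩)
  have hEq : ∀ᶠ h in 𝓝[>] (0:ℝ), ∫ t in Ioc a b, (φ t - φ (t - h)) / h
      = h⁻¹ * ((∫ t in (b-h)..b, φ t) - (∫ t in (a-h)..a, φ t)) := by
    filter_upwards [self_mem_nhdsWithin] with h (hh : 0 < h)
    have hic : ∀ c d : ℝ, IntervalIntegrable φ volume c d :=
      fun c d => hφ.continuous.intervalIntegrable _ _
    have hic' : ∀ c d : ℝ, IntervalIntegrable (fun t => φ (t - h)) volume c d :=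
      fun c d => (hφ.continuous.comp (continuous_id.sub continuous_const)).intervalIntegrable _ _
    have e1 : ∫ t in Ioc a b, (φ t - φ (t - h)) / h
        = ∫ t in a..b, (φ t - φ (t - h)) / h := by
      rw [intervalIntegral.integral_of_le hab.le]
    have e2 : ∫ t in a..b, (φ t - φ (t - h)) / h
        = h⁻¹ * ((∫ t in a..b, φ t) - ∫ t in a..b, φ (t - h)) := by
      simp_rw [div_eq_inv_mul]
      rw [intervalIntegral.integral_const_mul, intervalIntegral.integral_sub (hic a b) (hic' a b)]
    have e3 : ∫ t in a..b, φ (t - h) = ∫ t in (a-h)..(b-h), φ t :=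
      intervalIntegral.integral_comp_sub_right φ h
    have a1 : (∫ t in (a-h)..a, φ t) + (∫ t in a..b, φ t) = ∫ t in (a-h)..b, φ t :=
      intervalIntegral.integral_add_adjacent_intervals (hic _ _) (hic _ _)
    have a2 : (∫ t in (a-h)..(b-h), φ t) + (∫ t in (b-h)..b, φ t) = ∫ t in (a-h)..b, φ t :=
      intervalIntegral.integral_add_adjacent_intervals (hic _ _) (hic _ _)
    rw [e1, e2, e3]
    have : (∫ t in a..b, φ t) - (∫ t in (a-h)..(b-h), φ t)
        = (∫ t in (b-h)..b, φ t) - (∫ t in (a-h)..a, φ t) := by linarith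
    rw [this]
  have hB : Tendsto (fun h => h⁻¹ * ((∫ t in (b-h)..b, φ t) - (∫ t in (a-h)..a, φ t)))
      (𝓝[>] (0:ℝ)) (𝓝 (φ b - φ a)) := by
    have := (tendsto_avg_left hφ b).sub (tendsto_avg_left hφ a)
    refine this.congr fun h => ?_
    ring
  exact (tendsto_nhds_unique (hDCT.congr' hEq) hB).symm

/-- On an interval where a continuous function does not vanish, it has constant sign. -/
lemma sign_const {a b : ℝ} {ψ : ℝ → ℝ} (hc : ContinuousOn ψ (Icc a b))
    (hne : ∀ t ∈ Ioo a b, ψ t ≠ 0) :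
    (∀ t ∈ Ioo a b, 0 < ψ t) ∨ (∀ t ∈ Ioo a b, ψ t < 0) := by
  by_contra hcon
  push_neg at hcon
  obtain ⟨⟨s, hs, hsle⟩, ⟨t, ht, htle⟩⟩ := hcon
  have hs0 : ψ s < 0 := lt_of_le_of_ne hsle (hne s hs)
  have ht0 : 0 < ψ t := lt_of_le_of_ne htle (Ne.symm (hne t ht))
  have hsub : uIcc s t ⊆ Ioo a b := by
    rw [uIcc_eq_union]
    exact union_subset (Icc_subset_Ioo hs.1 ht.2) (Icc_subset_Ioo ht.1 hs.2)
  have hmem : (0:ℝ) ∈ uIcc (ψ s) (ψ t) := by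
    rw [mem_uIcc]; left; exact ⟨hs0.le, ht0.le⟩
  obtain ⟨r, hr, hr0⟩ := intermediate_value_uIcc
    (hc.mono (hsub.trans Ioo_subset_Icc_self)) hmem
  exact hne r (hsub hr) hr0

/-- If a control is a.e. `c` just before `τ` and a.e. `-c` just after `τ`, and a.e. equals
the sign of a continuous function nonvanishing on both sides of `τ`, that function
vanishes at `τ`. -/
lemma switch_zero {T τ a₀ b₀ ε c : ℝ} {φ v : ℝ → ℝ}
    (hcont : ContinuousOn φ (Icc 0 T))
    (ha₀0 : 0 ≤ a₀) (ha₀ : a₀ < τ) (hb₀ : τ < b₀) (hb₀T : b₀ ≤ T)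
    (hl : ∀ t ∈ Ioo a₀ τ, φ t ≠ 0) (hr : ∀ t ∈ Ioo τ b₀, φ t ≠ 0)
    (hmax : ∀ᵐ t ∂volume, t ∈ Icc (0:ℝ) T → v t * φ t = |φ t|)
    (hc : |c| = 1) (hε : 0 < ε)
    (hL : ∀ᵐ t ∂volume, t ∈ Ioo (τ - ε) τ → v t = c)
    (hR : ∀ᵐ t ∂volume, t ∈ Ioo τ (τ + ε) → v t = -c) :
    φ τ = 0 := by
  have hτmem : τ ∈ Icc (0:ℝ) T := ⟨ha₀0.trans ha₀.le, hb₀.le.trans hb₀T⟩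
  have key : ∀ (I : Set ℝ) (d : ℝ), I ⊆ Icc 0 T → 0 < volume I →
      (∀ t ∈ I, φ t ≠ 0) → (∀ᵐ t ∂volume, t ∈ I → v t = d) →
      ∃ t ∈ I, 0 < d * φ t := by
    intro I d hIsub hIm hIφ hvI
    by_contra hno
    push_neg at hno
    have : ∀ᵐ t ∂volume, t ∉ I := by
      filter_upwards [hmax, hvI] with t h1 h2
      intro htI
      have h3 : v t * φ t = |φ t| := h1 (hIsub htI)
      have h4 : v t = d := h2 htI
      have h5 : 0 < |φ t| := abs_pos.2 (hIφ t htI)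
      rw [h4] at h3
      exact absurd (h3 ▸ h5) (not_lt.2 (hno t htI))
    rw [← measure_eq_zero_iff_ae_notMem] at this
    exact absurd this hIm.ne'
  have hleft : 0 ≤ c * φ τ := by
    by_contra hlt
    push_neg at hlt
    have htend : Tendsto (fun t => c * φ t) (𝓝[Ioo a₀ τ] τ) (𝓝 (c * φ τ)) := by
      refine Tendsto.const_mul c ?_
      exact ((hcont τ hτmem).mono (Ioo_subset_Icc_self.trans
        (Icc_subset_Icc ha₀0 (hb₀.le.trans hb₀T)))).tendsto
    have hev : ∀ᶠ t in 𝓝[Ioo a₀ τ] τ, c * φ t < 0 := htend.eventually_lt_const hlt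
    rw [eventually_iff, mem_nhdsWithin] at hev
    obtain ⟨U, hUopen, hτU, hUsub⟩ := hev
    obtain ⟨δ, hδ, hball⟩ := Metric.isOpen_iff.1 hUopen τ hτU
    set m := max (max a₀ (τ - ε)) (τ - δ) with hm
    have hmlt : m < τ := by
      simp only [hm, max_lt_iff]
      exact ⟨⟨ha₀, by linarith⟩, by linarith⟩
    have hIsub : Ioo m τ ⊆ Ioo a₀ τ :=
      Ioo_subset_Ioo (le_trans (le_max_left _ _) (le_max_left _ _)) le_rfl
    have hIball : Ioo m τ ⊆ U := by
      intro t htI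
      apply hball
      rw [Metric.mem_ball, Real.dist_eq, abs_lt]
      have h1 : τ - δ ≤ m := le_max_right _ _
      constructor
      · linarith [htI.1]
      · linarith [htI.2]
    obtain ⟨t, htI, htpos⟩ := key (Ioo m τ) c
      (fun t ht => Ioo_subset_Icc_self.trans (Icc_subset_Icc ha₀0 (hb₀.le.trans hb₀T)) (hIsub ht))
      (by rw [Real.volume_Ioo]; simp [hmlt])
      (fun t ht => hl t (hIsub ht))
      (by filter_upwards [hL] with t h ht
          exact h ⟨lt_of_le_of_lt (le_trans (le_max_right _ _) (le_max_left _ _)) ht.1, ht.2⟩)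
    exact absurd (hUsub ⟨hIball htI, hIsub htI⟩) (not_lt.2 htpos.le)
  have hright : 0 ≤ -c * φ τ := by
    by_contra hlt
    push_neg at hlt
    have htend : Tendsto (fun t => -c * φ t) (𝓝[Ioo τ b₀] τ) (𝓝 (-c * φ τ)) := by
      refine Tendsto.const_mul (-c) ?_
      exact ((hcont τ hτmem).mono (Ioo_subset_Icc_self.trans
        (Icc_subset_Icc (ha₀0.trans ha₀.le) hb₀T))).tendsto
    have hev : ∀ᶠ t in 𝓝[Ioo τ b₀] τ, -c * φ t < 0 := htend.eventually_lt_const hlt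
    rw [eventually_iff, mem_nhdsWithin] at hev
    obtain ⟨U, hUopen, hτU, hUsub⟩ := hev
    obtain ⟨δ, hδ, hball⟩ := Metric.isOpen_iff.1 hUopen τ hτU
    set m := min (min b₀ (τ + ε)) (τ + δ) with hm
    have hmlt : τ < m := by
      simp only [hm, lt_min_iff]
      exact ⟨⟨hb₀, by linarith⟩, by linarith⟩
    have hIsub : Ioo τ m ⊆ Ioo τ b₀ :=
      Ioo_subset_Ioo le_rfl (le_trans (min_le_left _ _) (min_le_left _ _))
    have hIball : Ioo τ m ⊆ U := by
      intro t htI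
      apply hball
      rw [Metric.mem_ball, Real.dist_eq, abs_lt]
      have h1 : m ≤ τ + δ := min_le_right _ _
      constructor
      · linarith [htI.1]
      · linarith [htI.2]
    obtain ⟨t, htI, htpos⟩ := key (Ioo τ m) (-c)
      (fun t ht => Ioo_subset_Icc_self.trans
        (Icc_subset_Icc (ha₀0.trans ha₀.le) hb₀T) (hIsub ht))
      (by rw [Real.volume_Ioo]; simp [hmlt])
      (fun t ht => hr t (hIsub ht))
      (by filter_upwards [hR] with t h ht
          exact h ⟨ht.1, lt_of_lt_of_le ht.2 (le_trans (min_le_left _ _) (min_le_right _ _))⟩)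
    exact absurd (hUsub ⟨hIball htI, hIsub htI⟩) (not_lt.2 htpos.le)
  have hc0 : c ≠ 0 := by intro h; rw [h] at hc; simp at hc
  have hz : c * φ τ = 0 := le_antisymm (by linarith) hleft
  exact (mul_eq_zero.1 hz).resolve_left hc0

/-- The key quantitative lemma: a Lipschitz function vanishing at `τ`, whose a.e.
derivative on `(0,T)` is `e·w·χ` where `w` a.e. equals the sign of a function `ψ`
nonvanishing on `(τ,τ')` and `χ` is continuous and nonvanishing, cannot vanish at `τ'`. -/
lemma core {T τ τ' : ℝ} {K : ℝ≥0} {φ ψ χ w : ℝ → ℝ} {e : ℝ} (he : e ≠ 0)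
    (hφK : LipschitzOnWith K φ (Icc 0 T))
    (hτ0 : 0 < τ) (hττ' : τ < τ') (hτ'T : τ' < T)
    (hderiv : ∀ᵐ x ∂volume, x ∈ Ioo (0:ℝ) T → HasDerivAt φ (e * (w x * χ x)) x)
    (hw : ∀ᵐ x ∂volume, x ∈ Icc (0:ℝ) T → w x * ψ x = |ψ x|)
    (hψ : ∀ t ∈ Ioo τ τ', ψ t ≠ 0) (hψc : ContinuousOn ψ (Icc 0 T))
    (hχc : ContinuousOn χ (Icc 0 T)) (hχ : ∀ t ∈ Icc (0:ℝ) T, χ t ≠ 0)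
    (hφτ : φ τ = 0) : φ τ' ≠ 0 := by
  have hT : (0:ℝ) < T := hτ0.trans (hττ'.trans hτ'T)
  have hsub : Icc τ τ' ⊆ Icc (0:ℝ) T := Icc_subset_Icc hτ0.le hτ'T.le
  set ρ : ℝ → ℝ := fun t => max 0 (min t T) with hρdef
  have hρlip : LipschitzWith 1 ρ := by
    have := (LipschitzWith.id.min_const T).const_max 0
    simpa [hρdef] using this
  have hρmaps : ∀ t, ρ t ∈ Icc (0:ℝ) T := fun t =>
    ⟨le_max_left _ _, max_le hT.le (min_le_right _ _)⟩
  have hρid : ∀ t ∈ Icc (0:ℝ) T, ρ t = t := fun t ht => by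
    simp only [hρdef]; rw [min_eq_left ht.2, max_eq_right ht.1]
  set φ' : ℝ → ℝ := φ ∘ ρ with hφ'def
  have hφ'lip : LipschitzWith (K * 1) φ' := by
    rw [← lipschitzOnWith_univ]
    exact hφK.comp (lipschitzOnWith_univ.2 hρlip) (fun t _ => hρmaps t)
  have hφ'eq : ∀ t ∈ Icc (0:ℝ) T, φ' t = φ t := fun t ht => by
    simp only [hφ'def, Function.comp_apply, hρid t ht]
  have hφ'nhds : ∀ x ∈ Ioo (0:ℝ) T, φ' =ᶠ[𝓝 x] φ := by
    intro x hx
    filter_upwards [Ioo_mem_nhds hx.1 hx.2] with t ht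
    exact hφ'eq t (Ioo_subset_Icc_self ht)
  obtain ⟨σ, hσ0, hσψ⟩ : ∃ σ : ℝ, σ ≠ 0 ∧ ∀ t ∈ Ioo τ τ', σ * ψ t = |ψ t| := by
    rcases sign_const (hψc.mono hsub) hψ with hpos | hneg
    · exact ⟨1, one_ne_zero, fun t ht => by rw [one_mul, abs_of_pos (hpos t ht)]⟩
    · exact ⟨-1, by norm_num, fun t ht => by rw [abs_of_neg (hneg t ht)]; ring⟩
  have hwσ : ∀ᵐ x ∂volume, x ∈ Ioo τ τ' → w x = σ := by
    filter_upwards [hw] with x h1 hx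
    have h2 : w x * ψ x = |ψ x| := h1 (hsub (Ioo_subset_Icc_self hx))
    have h3 : σ * ψ x = |ψ x| := hσψ x hx
    have h4 : (w x - σ) * ψ x = 0 := by rw [sub_mul, h2, h3, sub_self]
    rcases mul_eq_zero.1 h4 with h5 | h5
    · linarith [h5]
    · exact absurd h5 (hψ x hx)
  have hFTC : φ' τ' - φ' τ = ∫ t in Ioc τ τ', (e * σ) * χ t := by
    refine ftc_lipschitz hφ'lip hττ' ?_
    filter_upwards [hderiv, hwσ] with x h1 h2 hx
    have hx' : x ∈ Ioo (0:ℝ) T := ⟨hτ0.trans hx.1, hx.2.trans hτ'T⟩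
    have := (h1 hx').congr_of_eventuallyEq (hφ'nhds x hx')
    rw [h2 hx] at this
    simpa only [mul_assoc] using this
  have hχint : IntervalIntegrable χ volume τ τ' := by
    apply ContinuousOn.intervalIntegrable
    rw [uIcc_of_le hττ'.le]
    exact hχc.mono hsub
  have hχI : ∫ t in Ioc τ τ', χ t ≠ 0 := by
    have hIoc : ∫ t in Ioc τ τ', χ t = ∫ t in τ..τ', χ t :=
      (intervalIntegral.integral_of_le hττ'.le).symm
    rcases sign_const (hχc.mono hsub) (fun t ht => hχ t (hsub (Ioo_subset_Icc_self ht)))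
      with hpos | hneg
    · rw [hIoc]
      exact (intervalIntegral.intervalIntegral_pos_of_pos_on hχint hpos hττ').ne'
    · have : 0 < ∫ t in τ..τ', -χ t :=
        intervalIntegral.intervalIntegral_pos_of_pos_on hχint.neg
          (fun t ht => neg_pos.2 (hneg t ht)) hττ'
      rw [intervalIntegral.integral_neg] at this
      rw [hIoc]
      exact (neg_pos.1 this).ne
  rw [hφ'eq τ' (hsub ⟨hττ'.le, le_refl _⟩), hφ'eq τ (hsub ⟨le_refl _, hττ'.le⟩), hφτ, sub_zero]
    at hFTC
  rw [hFTC, MeasureTheory.integral_const_mul]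
  exact mul_ne_zero (mul_ne_zero he hσ0) hχI

/-- Lipschitz bound for a switching function. -/
lemma phi_lip_aux {Y : E3 → E3} {T R L Cq Cl MY NY : ℝ} {q lam : ℝ → E3}
    (hYdiff : Differentiable ℝ Y) (hR : 0 ≤ R)
    (hq : ∀ t ∈ Icc (0:ℝ) T, ‖q t‖ ≤ R) (hl : ∀ t ∈ Icc (0:ℝ) T, ‖lam t‖ ≤ L)
    (hqlip : ∀ s ∈ Icc (0:ℝ) T, ∀ t ∈ Icc (0:ℝ) T, ‖q s - q t‖ ≤ Cq * |s - t|)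
    (hllip : ∀ s ∈ Icc (0:ℝ) T, ∀ t ∈ Icc (0:ℝ) T, ‖lam s - lam t‖ ≤ Cl * |s - t|)
    (hMY : ∀ x ∈ Metric.closedBall (0:E3) R, ‖Y x‖ ≤ MY)
    (hNY : ∀ x ∈ Metric.closedBall (0:E3) R, ‖fderiv ℝ Y x‖ ≤ NY) :
    LipschitzOnWith (Cl * MY + L * (NY * Cq)).toNNReal (phiF Y q lam) (Icc 0 T) := by
  refine LipschitzOnWith.of_dist_le_mul ?_
  intro s hs t ht
  rw [Real.dist_eq, Real.dist_eq]
  have hqsB : q s ∈ Metric.closedBall (0:E3) R := mem_closedBall_zero_iff.2 (hq s hs)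
  have hqtB : q t ∈ Metric.closedBall (0:E3) R := mem_closedBall_zero_iff.2 (hq t ht)
  have hMY0 : 0 ≤ MY := le_trans (norm_nonneg _) (hMY _ hqsB)
  have hNY0 : 0 ≤ NY := le_trans (norm_nonneg _) (hNY _ hqsB)
  have hL0 : 0 ≤ L := le_trans (norm_nonneg _) (hl t ht)
  have hsplit : phiF Y q lam s - phiF Y q lam t
      = ⟪lam s - lam t, Y (q s)⟫ + ⟪lam t, Y (q s) - Y (q t)⟫ := by
    simp only [phiF, inner_sub_left, inner_sub_right]
    ring
  have hYlip : ‖Y (q s) - Y (q t)‖ ≤ NY * ‖q s - q t‖ :=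
    Convex.norm_image_sub_le_of_norm_fderiv_le
      (fun x _ => (hYdiff x)) hNY (convex_closedBall _ _) hqtB hqsB
  have h1 : |⟪lam s - lam t, Y (q s)⟫| ≤ (Cl * |s - t|) * MY := by
    refine le_trans (abs_real_inner_le_norm _ _) ?_
    exact mul_le_mul (hllip s hs t ht) (hMY _ hqsB) (norm_nonneg _)
      (le_trans (norm_nonneg _) (hllip s hs t ht))
  have h2 : |⟪lam t, Y (q s) - Y (q t)⟫| ≤ L * (NY * (Cq * |s - t|)) := by
    refine le_trans (abs_real_inner_le_norm _ _) ?_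
    refine mul_le_mul (hl t ht) ?_ (norm_nonneg _) hL0
    exact le_trans hYlip (mul_le_mul_of_nonneg_left (hqlip s hs t ht) hNY0)
  calc |phiF Y q lam s - phiF Y q lam t| ≤ (Cl * |s - t|) * MY + L * (NY * (Cq * |s - t|)) := by
        rw [hsplit]
        exact le_trans (abs_add_le _ _) (add_le_add h1 h2)
    _ = (Cl * MY + L * (NY * Cq)) * |s - t| := by ring
    _ ≤ ((Cl * MY + L * (NY * Cq)).toNNReal : ℝ) * |s - t| :=
        mul_le_mul_of_nonneg_right (Real.le_coe_toNNReal _) (abs_nonneg _)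

/-- The main setup : regularity and a.e. differentiability of the switching functions. -/
lemma extremal_setup (X₁ X₂ : E3 → E3) (hX₁ : ContDiff ℝ (⊤ : ℕ∞) X₁)
    (hX₂ : ContDiff ℝ (⊤ : ℕ∞) X₂) (T : ℝ) (q : ℝ → E3) (u : ℝ → ℝ × ℝ)
    (lam : ℝ → E3) (hadm : IsAdmissiblePair X₁ X₂ T q u)
    (hlift : IsExtremalLift X₁ X₂ T q u lam) :
    (∃ K : ℝ≥0, LipschitzOnWith K (phiF X₁ q lam) (Icc 0 T)) ∧
    (∃ K : ℝ≥0, LipschitzOnWith K (phiF X₂ q lam) (Icc 0 T)) ∧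
    ContinuousOn (phiF (X12 X₁ X₂) q lam) (Icc 0 T) ∧
    (∀ᵐ x ∂volume, x ∈ Ioo (0:ℝ) T →
      HasDerivAt (phiF X₁ q lam) ((-1) * ((u x).2 * phiF (X12 X₁ X₂) q lam x)) x) ∧
    (∀ᵐ x ∂volume, x ∈ Ioo (0:ℝ) T →
      HasDerivAt (phiF X₂ q lam) ((1:ℝ) * ((u x).1 * phiF (X12 X₁ X₂) q lam x)) x) ∧
    (∀ᵐ t ∂volume, t ∈ Icc (0:ℝ) T → (u t).1 * phiF X₁ q lam t = |phiF X₁ q lam t|) ∧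
    (∀ᵐ t ∂volume, t ∈ Icc (0:ℝ) T → (u t).2 * phiF X₂ q lam t = |phiF X₂ q lam t|) := by
  have h1le : ((⊤:ℕ∞) : WithTop ℕ∞) ≠ 0 := by simp
  have hX₁d : Differentiable ℝ X₁ := hX₁.differentiable h1le
  have hX₂d : Differentiable ℝ X₂ := hX₂.differentiable h1le
  obtain ⟨hT0, humeas, hubd, hFint, hqeq⟩ := hadm
  obtain ⟨hlam0, hAint, hleq, hmax⟩ := hlift
  -- primitives
  have hf₁ : Integrable ((Icc (0:ℝ) T).indicator
      (fun s => (u s).1 • X₁ (q s) + (u s).2 • X₂ (q s))) volume :=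
    hFint.integrable_indicator measurableSet_Icc
  have hf₂ : Integrable ((Icc (0:ℝ) T).indicator (adjVec X₁ X₂ u q lam)) volume :=
    hAint.integrable_indicator measurableSet_Icc
  have hconv : ∀ (g : ℝ → E3), ∀ t ∈ Icc (0:ℝ) T,
      (∫ s in Icc (0:ℝ) t, g s) = ∫ s in (0:ℝ)..t, (Icc (0:ℝ) T).indicator g s := by
    intro g t ht
    have hss : Ioc (0:ℝ) t ⊆ Icc 0 T :=
      Ioc_subset_Icc_self.trans (Icc_subset_Icc le_rfl ht.2)
    rw [integral_Icc_eq_integral_Ioc, intervalIntegral.integral_of_le ht.1,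
      setIntegral_indicator measurableSet_Icc, inter_eq_left.2 hss]
  have hq' : ∀ t ∈ Icc (0:ℝ) T, q t = q 0 + ∫ s in (0:ℝ)..t,
      (Icc (0:ℝ) T).indicator (fun s => (u s).1 • X₁ (q s) + (u s).2 • X₂ (q s)) s := by
    intro t ht
    rw [hqeq t ht, hconv _ t ht]
  have hl' : ∀ t ∈ Icc (0:ℝ) T, lam t = lam 0 + ∫ s in (0:ℝ)..t,
      (Icc (0:ℝ) T).indicator (adjVec X₁ X₂ u q lam) s := by
    intro t ht
    rw [hleq t ht, hconv _ t ht]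
  -- continuity of q and lam
  have hqcont : ContinuousOn q (Icc 0 T) := by
    refine ContinuousOn.congr (f := fun t => q 0 + ∫ s in (0:ℝ)..t,
      (Icc (0:ℝ) T).indicator (fun s => (u s).1 • X₁ (q s) + (u s).2 • X₂ (q s)) s) ?_ ?_
    · exact (continuous_const.add (intervalIntegral.continuous_primitive
        (fun a b => hf₁.intervalIntegrable) 0)).continuousOn
    · exact fun t ht => hq' t ht
  have hlcont : ContinuousOn lam (Icc 0 T) := by
    refine ContinuousOn.congr (f := fun t => lam 0 + ∫ s in (0:ℝ)..t,
      (Icc (0:ℝ) T).indicator (adjVec X₁ X₂ u q lam) s) ?_ ?_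
    · exact (continuous_const.add (intervalIntegral.continuous_primitive
        (fun a b => hf₂.intervalIntegrable) 0)).continuousOn
    · exact fun t ht => hl' t ht
  -- bounds
  obtain ⟨R₀, hR₀⟩ := isCompact_Icc.exists_bound_of_continuousOn hqcont
  obtain ⟨L₀, hL₀⟩ := isCompact_Icc.exists_bound_of_continuousOn hlcont
  set R := max R₀ 0 with hRdef
  set L := max L₀ 0 with hLdef
  have hR : (0:ℝ) ≤ R := le_max_right _ _
  have hqR : ∀ t ∈ Icc (0:ℝ) T, ‖q t‖ ≤ R := fun t ht => (hR₀ t ht).trans (le_max_left _ _)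
  have hlL : ∀ t ∈ Icc (0:ℝ) T, ‖lam t‖ ≤ L := fun t ht => (hL₀ t ht).trans (le_max_left _ _)
  have hqB : ∀ t ∈ Icc (0:ℝ) T, q t ∈ Metric.closedBall (0:E3) R :=
    fun t ht => mem_closedBall_zero_iff.2 (hqR t ht)
  obtain ⟨M₁, hM₁⟩ := (isCompact_closedBall (0:E3) R).exists_bound_of_continuousOn
    hX₁.continuous.continuousOn
  obtain ⟨M₂, hM₂⟩ := (isCompact_closedBall (0:E3) R).exists_bound_of_continuousOn
    hX₂.continuous.continuousOn
  obtain ⟨N₁, hN₁⟩ := (isCompact_closedBall (0:E3) R).exists_bound_of_continuousOn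
    (hX₁.continuous_fderiv h1le).continuousOn
  obtain ⟨N₂, hN₂⟩ := (isCompact_closedBall (0:E3) R).exists_bound_of_continuousOn
    (hX₂.continuous_fderiv h1le).continuousOn
  -- bound on the dynamics
  have hFbd : ∀ s ∈ Icc (0:ℝ) T, ‖(u s).1 • X₁ (q s) + (u s).2 • X₂ (q s)‖ ≤ M₁ + M₂ := by
    intro s hs
    refine le_trans (norm_add_le _ _) (add_le_add ?_ ?_)
    · rw [norm_smul, Real.norm_eq_abs]
      calc |(u s).1| * ‖X₁ (q s)‖ ≤ 1 * M₁ :=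
            mul_le_mul (hubd s hs).1 (hM₁ _ (hqB s hs)) (norm_nonneg _) zero_le_one
        _ = M₁ := one_mul _
    · rw [norm_smul, Real.norm_eq_abs]
      calc |(u s).2| * ‖X₂ (q s)‖ ≤ 1 * M₂ :=
            mul_le_mul (hubd s hs).2 (hM₂ _ (hqB s hs)) (norm_nonneg _) zero_le_one
        _ = M₂ := one_mul _
  -- bound on the adjoint dynamics
  have hAbd : ∀ s ∈ Icc (0:ℝ) T, ‖adjVec X₁ X₂ u q lam s‖ ≤ (N₁ + N₂) * L := by
    intro s hs
    rw [adjVec, norm_neg]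
    have hMop : ‖(u s).1 • fderiv ℝ X₁ (q s) + (u s).2 • fderiv ℝ X₂ (q s)‖ ≤ N₁ + N₂ := by
      refine le_trans (norm_add_le _ _) (add_le_add ?_ ?_)
      · rw [norm_smul, Real.norm_eq_abs]
        calc |(u s).1| * ‖fderiv ℝ X₁ (q s)‖ ≤ 1 * N₁ :=
              mul_le_mul (hubd s hs).1 (hN₁ _ (hqB s hs)) (norm_nonneg _) zero_le_one
          _ = N₁ := one_mul _
      · rw [norm_smul, Real.norm_eq_abs]
        calc |(u s).2| * ‖fderiv ℝ X₂ (q s)‖ ≤ 1 * N₂ :=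
              mul_le_mul (hubd s hs).2 (hN₂ _ (hqB s hs)) (norm_nonneg _) zero_le_one
          _ = N₂ := one_mul _
    calc ‖ContinuousLinearMap.adjoint
          ((u s).1 • fderiv ℝ X₁ (q s) + (u s).2 • fderiv ℝ X₂ (q s)) (lam s)‖
        ≤ ‖ContinuousLinearMap.adjoint
            ((u s).1 • fderiv ℝ X₁ (q s) + (u s).2 • fderiv ℝ X₂ (q s))‖ * ‖lam s‖ :=
          ContinuousLinearMap.le_opNorm _ _
      _ = ‖(u s).1 • fderiv ℝ X₁ (q s) + (u s).2 • fderiv ℝ X₂ (q s)‖ * ‖lam s‖ := by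
          rw [LinearIsometryEquiv.norm_map]
      _ ≤ (N₁ + N₂) * L := by
          refine mul_le_mul hMop (hlL s hs) (norm_nonneg _) ?_
          exact le_trans (norm_nonneg _) hMop
  -- Lipschitz bounds for q and lam on [0,T]
  have hlip_gen : ∀ (g : ℝ → E3) (Z : ℝ → E3) (C : ℝ),
      (∀ t ∈ Icc (0:ℝ) T, g t = g 0 + ∫ s in (0:ℝ)..t, (Icc (0:ℝ) T).indicator Z s) →
      Integrable ((Icc (0:ℝ) T).indicator Z) volume →
      (∀ s ∈ Icc (0:ℝ) T, ‖Z s‖ ≤ C) →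
      ∀ s ∈ Icc (0:ℝ) T, ∀ t ∈ Icc (0:ℝ) T, ‖g s - g t‖ ≤ C * |s - t| := by
    intro g Z C hgeq hZint hZbd s hs t ht
    have hsub : g s - g t = ∫ r in t..s, (Icc (0:ℝ) T).indicator Z r := by
      rw [hgeq s hs, hgeq t ht]
      rw [add_sub_add_left_eq_sub]
      exact integral_interval_sub_left hZint.intervalIntegrable hZint.intervalIntegrable
    rw [hsub]
    refine intervalIntegral.norm_integral_le_of_norm_le_const ?_
    intro x hx
    have hxmem : x ∈ Icc (0:ℝ) T := by
      have h1 : Set.uIoc t s ⊆ Icc (min t s) (max t s) := Ioc_subset_Icc_self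
      have h2 : Icc (min t s) (max t s) ⊆ Icc (0:ℝ) T := by
        apply Icc_subset_Icc
        · exact le_min ht.1 hs.1
        · exact max_le ht.2 hs.2
      exact h2 (h1 hx)
    rw [indicator_of_mem hxmem]
    exact hZbd x hxmem
  have hqlip := hlip_gen q (fun s => (u s).1 • X₁ (q s) + (u s).2 • X₂ (q s)) (M₁ + M₂)
    hq' hf₁ hFbd
  have hllip := hlip_gen lam (adjVec X₁ X₂ u q lam) ((N₁ + N₂) * L) hl' hf₂ hAbd
  -- Lipschitz of the switching functions
  have hφ₁lip := phi_lip_aux hX₁d hR hqR hlL hqlip hllip hM₁ hN₁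
  have hφ₂lip := phi_lip_aux hX₂d hR hqR hlL hqlip hllip hM₂ hN₂
  -- continuity of φ₁₂
  have hX12cont : Continuous (X12 X₁ X₂) := by
    show Continuous (fun x => fderiv ℝ X₂ x (X₁ x) - fderiv ℝ X₁ x (X₂ x))
    exact ((hX₂.continuous_fderiv h1le).clm_apply hX₁.continuous).sub
      ((hX₁.continuous_fderiv h1le).clm_apply hX₂.continuous)
  have hφ₁₂cont : ContinuousOn (phiF (X12 X₁ X₂) q lam) (Icc 0 T) :=
    ContinuousOn.inner hlcont (hX12cont.comp_continuousOn hqcont)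
  -- a.e. derivatives of q and lam
  have hqd : ∀ᵐ x ∂volume, x ∈ Ioo (0:ℝ) T →
      HasDerivAt q ((u x).1 • X₁ (q x) + (u x).2 • X₂ (q x)) x := by
    filter_upwards [ae_hasDerivAt_primitive hf₁] with x hx hxI
    have h1 : HasDerivAt (fun t => q 0 + ∫ s in (0:ℝ)..t, (Icc (0:ℝ) T).indicator
        (fun s => (u s).1 • X₁ (q s) + (u s).2 • X₂ (q s)) s)
        ((Icc (0:ℝ) T).indicator (fun s => (u s).1 • X₁ (q s) + (u s).2 • X₂ (q s)) x) x :=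
      hx.const_add (q 0)
    rw [indicator_of_mem (Ioo_subset_Icc_self hxI)] at h1
    refine h1.congr_of_eventuallyEq ?_
    filter_upwards [Ioo_mem_nhds hxI.1 hxI.2] with t ht
    exact hq' t (Ioo_subset_Icc_self ht)
  have hld : ∀ᵐ x ∂volume, x ∈ Ioo (0:ℝ) T →
      HasDerivAt lam (adjVec X₁ X₂ u q lam x) x := by
    filter_upwards [ae_hasDerivAt_primitive hf₂] with x hx hxI
    have h1 : HasDerivAt (fun t => lam 0 + ∫ s in (0:ℝ)..t, (Icc (0:ℝ) T).indicator
        (adjVec X₁ X₂ u q lam) s)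
        ((Icc (0:ℝ) T).indicator (adjVec X₁ X₂ u q lam) x) x :=
      hx.const_add (lam 0)
    rw [indicator_of_mem (Ioo_subset_Icc_self hxI)] at h1
    refine h1.congr_of_eventuallyEq ?_
    filter_upwards [Ioo_mem_nhds hxI.1 hxI.2] with t ht
    exact hl' t (Ioo_subset_Icc_self ht)
  -- a.e. derivatives of φ₁ and φ₂
  have hφder : ∀ᵐ x ∂volume, x ∈ Ioo (0:ℝ) T →
      (HasDerivAt (phiF X₁ q lam) ((-1) * ((u x).2 * phiF (X12 X₁ X₂) q lam x)) x ∧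
       HasDerivAt (phiF X₂ q lam) ((1:ℝ) * ((u x).1 * phiF (X12 X₁ X₂) q lam x)) x) := by
    filter_upwards [hqd, hld] with x hqx hlx hxI
    have hq1 := hqx hxI
    have hl1 := hlx hxI
    have hcomp₁ : HasDerivAt (fun t => X₁ (q t))
        (fderiv ℝ X₁ (q x) ((u x).1 • X₁ (q x) + (u x).2 • X₂ (q x))) x :=
      (hX₁d (q x)).hasFDerivAt.comp_hasDerivAt x hq1
    have hcomp₂ : HasDerivAt (fun t => X₂ (q t))
        (fderiv ℝ X₂ (q x) ((u x).1 • X₁ (q x) + (u x).2 • X₂ (q x))) x :=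
      (hX₂d (q x)).hasFDerivAt.comp_hasDerivAt x hq1
    have hinner₁ := HasDerivAt.inner ℝ hl1 hcomp₁
    have hinner₂ := HasDerivAt.inner ℝ hl1 hcomp₂
    constructor
    · have hval : (⟪lam x, fderiv ℝ X₁ (q x) ((u x).1 • X₁ (q x) + (u x).2 • X₂ (q x))⟫
          + ⟪adjVec X₁ X₂ u q lam x, X₁ (q x)⟫ : ℝ)
          = (-1) * ((u x).2 * phiF (X12 X₁ X₂) q lam x) := by
        simp only [adjVec, phiF, X12, lieBracketVF, inner_neg_left,
          ContinuousLinearMap.adjoint_inner_left, ContinuousLinearMap.add_apply,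
          ContinuousLinearMap.smul_apply, ContinuousLinearMap.map_add,
          ContinuousLinearMap.map_smul, inner_add_right, inner_sub_right,
          real_inner_smul_right]
        ring
      exact hval ▸ hinner₁
    · have hval : (⟪lam x, fderiv ℝ X₂ (q x) ((u x).1 • X₁ (q x) + (u x).2 • X₂ (q x))⟫
          + ⟪adjVec X₁ X₂ u q lam x, X₂ (q x)⟫ : ℝ)
          = (1:ℝ) * ((u x).1 * phiF (X12 X₁ X₂) q lam x) := by
        simp only [adjVec, phiF, X12, lieBracketVF, inner_neg_left,
          ContinuousLinearMap.adjoint_inner_left, ContinuousLinearMap.add_apply,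
          ContinuousLinearMap.smul_apply, ContinuousLinearMap.map_add,
          ContinuousLinearMap.map_smul, inner_add_right, inner_sub_right,
          real_inner_smul_right]
        ring
      exact hval ▸ hinner₂
  -- maximality split
  have hmaxsplit : ∀ᵐ t ∂volume, t ∈ Icc (0:ℝ) T →
      ((u t).1 * phiF X₁ q lam t = |phiF X₁ q lam t| ∧
       (u t).2 * phiF X₂ q lam t = |phiF X₂ q lam t|) := by
    filter_upwards [hmax] with t hmx ht
    have h1 : (u t).1 * phiF X₁ q lam t ≤ |phiF X₁ q lam t| := by
      calc (u t).1 * phiF X₁ q lam t ≤ |(u t).1 * phiF X₁ q lam t| := le_abs_self _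
        _ = |(u t).1| * |phiF X₁ q lam t| := abs_mul _ _
        _ ≤ 1 * |phiF X₁ q lam t| :=
            mul_le_mul_of_nonneg_right (hubd t ht).1 (abs_nonneg _)
        _ = |phiF X₁ q lam t| := one_mul _
    have h2 : (u t).2 * phiF X₂ q lam t ≤ |phiF X₂ q lam t| := by
      calc (u t).2 * phiF X₂ q lam t ≤ |(u t).2 * phiF X₂ q lam t| := le_abs_self _
        _ = |(u t).2| * |phiF X₂ q lam t| := abs_mul _ _
        _ ≤ 1 * |phiF X₂ q lam t| :=
            mul_le_mul_of_nonneg_right (hubd t ht).2 (abs_nonneg _)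
        _ = |phiF X₂ q lam t| := one_mul _
    have heq := hmx ht
    constructor <;> [skip; skip] <;>
      · simp only [phiF] at *
        linarith
  exact ⟨⟨_, hφ₁lip⟩, ⟨_, hφ₂lip⟩, hφ₁₂cont,
    (hφder.mono fun x hx hxI => (hx hxI).1),
    (hφder.mono fun x hx hxI => (hx hxI).2),
    (hmaxsplit.mono fun t ht htI => (ht htI).1),
    (hmaxsplit.mono fun t ht htI => (ht htI).2)⟩

end Aux

/-- Along an extremal on which `φ₁₂` never vanishes, the switchings
of `u₁` and `u₂` alternate: if `τ < τ'` are switching times bounding a bang arc and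
`u₁` switches at `τ`, then `φ₁(τ') ≠ 0`, so `u₁` does not switch at `τ'` and the
control that switches at `τ'` (if any) is `u₂`; and symmetrically. -/
theorem statement_16 (X₁ X₂ : E3 → E3) (hX₁ : ContDiff ℝ (⊤ : ℕ∞) X₁)
    (hX₂ : ContDiff ℝ (⊤ : ℕ∞) X₂) (T : ℝ) (q : ℝ → E3) (u : ℝ → ℝ × ℝ) (lam : ℝ → E3)
    (hadm : IsAdmissiblePair X₁ X₂ T q u) (hlift : IsExtremalLift X₁ X₂ T q u lam)
    (h12 : ∀ t ∈ Icc (0:ℝ) T, phiF (X12 X₁ X₂) q lam t ≠ 0)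
    (τ τ' : ℝ) (hlt : τ < τ')
    (hτsw : IsSwitchingTime T (phiF X₁ q lam) (phiF X₂ q lam) τ)
    (hτ'sw : IsSwitchingTime T (phiF X₁ q lam) (phiF X₂ q lam) τ')
    (hbang : IsBangArc T (phiF X₁ q lam) (phiF X₂ q lam) τ τ') :
    (SwitchesAt T (phiF X₁ q lam) (phiF X₂ q lam) (fun t => (u t).1) τ →
      phiF X₁ q lam τ' ≠ 0 ∧
      ¬ SwitchesAt T (phiF X₁ q lam) (phiF X₂ q lam) (fun t => (u t).1) τ' ∧
      ((SwitchesAt T (phiF X₁ q lam) (phiF X₂ q lam) (fun t => (u t).1) τ' ∨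
          SwitchesAt T (phiF X₁ q lam) (phiF X₂ q lam) (fun t => (u t).2) τ') →
        SwitchesAt T (phiF X₁ q lam) (phiF X₂ q lam) (fun t => (u t).2) τ')) ∧
    (SwitchesAt T (phiF X₁ q lam) (phiF X₂ q lam) (fun t => (u t).2) τ →
      phiF X₂ q lam τ' ≠ 0 ∧
      ¬ SwitchesAt T (phiF X₁ q lam) (phiF X₂ q lam) (fun t => (u t).2) τ' ∧
      ((SwitchesAt T (phiF X₁ q lam) (phiF X₂ q lam) (fun t => (u t).1) τ' ∨
          SwitchesAt T (phiF X₁ q lam) (phiF X₂ q lam) (fun t => (u t).2) τ') →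
        SwitchesAt T (phiF X₁ q lam) (phiF X₂ q lam) (fun t => (u t).1) τ')) := by
  obtain ⟨a₀, b₀, harcL, harcR⟩ := hτsw
  obtain ⟨a₂, b₂, harcL2, harcR2⟩ := hτ'sw
  have hτ0 : 0 < τ := lt_of_le_of_lt harcL.1 harcL.2.1
  have hτ'T : τ' < T := lt_of_lt_of_le harcR2.2.1 harcR2.2.2.1
  obtain ⟨⟨K₁, hφ₁lip⟩, ⟨K₂, hφ₂lip⟩, hφ₁₂cont, hd1, hd2, hm1, hm2⟩ :=
    extremal_setup X₁ X₂ hX₁ hX₂ T q u lam hadm hlift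
  have hφ₁cont : ContinuousOn (phiF X₁ q lam) (Icc 0 T) := hφ₁lip.continuousOn
  have hφ₂cont : ContinuousOn (phiF X₂ q lam) (Icc 0 T) := hφ₂lip.continuousOn
  constructor
  · intro hsw1
    obtain ⟨_, c, hc, ε, hε, hLa, hRa⟩ := hsw1
    have hφ₁τ : phiF X₁ q lam τ = 0 :=
      switch_zero hφ₁cont harcL.1 harcL.2.1 hlt hτ'T.le
        (fun t ht => (harcL.2.2.2.1 t ht).1) (fun t ht => (hbang.2.2.2.1 t ht).1)
        hm1 hc hε hLa hRa
    have hφ₁τ' : phiF X₁ q lam τ' ≠ 0 :=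
      core (w := fun x => (u x).2) (ψ := phiF X₂ q lam)
        (by norm_num : (-1:ℝ) ≠ 0) hφ₁lip hτ0 hlt hτ'T hd1 hm2
        (fun t ht => (hbang.2.2.2.1 t ht).2) hφ₂cont hφ₁₂cont h12 hφ₁τ
    have hnot : ¬ SwitchesAt T (phiF X₁ q lam) (phiF X₂ q lam) (fun t => (u t).1) τ' := by
      intro hsw1'
      obtain ⟨⟨a₃, b₃, hL3, hR3⟩, c', hc', ε', hε', hL', hR'⟩ := hsw1'
      exact hφ₁τ' (switch_zero hφ₁cont hL3.1 hL3.2.1 hR3.2.1 hR3.2.2.1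
        (fun t ht => (hL3.2.2.2.1 t ht).1) (fun t ht => (hR3.2.2.2.1 t ht).1)
        hm1 hc' hε' hL' hR')
    refine ⟨hφ₁τ', hnot, ?_⟩
    rintro (h | h)
    · exact absurd h hnot
    · exact h
  · intro hsw2
    obtain ⟨_, c, hc, ε, hε, hLa, hRa⟩ := hsw2
    have hφ₂τ : phiF X₂ q lam τ = 0 :=
      switch_zero hφ₂cont harcL.1 harcL.2.1 hlt hτ'T.le
        (fun t ht => (harcL.2.2.2.1 t ht).2) (fun t ht => (hbang.2.2.2.1 t ht).2)
        hm2 hc hε hLa hRa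
    have hφ₂τ' : phiF X₂ q lam τ' ≠ 0 :=
      core (w := fun x => (u x).1) (ψ := phiF X₁ q lam)
        (one_ne_zero : (1:ℝ) ≠ 0) hφ₂lip hτ0 hlt hτ'T hd2 hm1
        (fun t ht => (hbang.2.2.2.1 t ht).1) hφ₁cont hφ₁₂cont h12 hφ₂τ
    have hnot : ¬ SwitchesAt T (phiF X₁ q lam) (phiF X₂ q lam) (fun t => (u t).2) τ' := by
      intro hsw2'
      obtain ⟨⟨a₃, b₃, hL3, hR3⟩, c', hc', ε', hε', hL', hR'⟩ := hsw2'
      exact hφ₂τ' (switch_zero hφ₂cont hL3.1 hL3.2.1 hR3.2.1 hR3.2.2.1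
        (fun t ht => (hL3.2.2.2.1 t ht).2) (fun t ht => (hR3.2.2.2.1 t ht).2)
        hm2 hc' hε' hL' hR')
    refine ⟨hφ₂τ', hnot, ?_⟩
    rintro (h | h)
    · exact h
    · exact absurd h hnot


end
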